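/- Assume at least one t_i is nonzero, so that d ≥ 1. Then the sequence Tr(1 − Θ^k(1))/(Σ_{j=0}^{k−1} d^j) converges in [0,∞] to a limit K as k → ∞; moreover K ≤ Tr(1 − Θ(1)), and K = ∞ if and only if Tr(1 − Θ(1)) = ∞. -/

import Mathlib

open Filter Finset ContinuousLinearMap
open scoped ENNReal
open scoped ComplexOrder
set_option maxHeartbeats 1000000
set_option linter.unusedSectionVars false
set_option synthInstance.maxHeartbeats 400000

/-- The trace (in `[0,∞]`) of an operator on a complex Hilbert space, computed in a
Hilbert (orthonormal) basis `b`: `Tr A = ∑ᵢ ⟨bᵢ, A bᵢ⟩` (real part, clamped to `[0,∞]`).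
For a positive operator this is the usual trace, independent of the choice of basis. -/
noncomputable def opTrace {H : Type*} [NormedAddCommGroup H] [InnerProductSpace ℂ H]
    [CompleteSpace H] {ι : Type*} (b : HilbertBasis ι ℂ H) (A : H →L[ℂ] H) : ℝ≥0∞ :=
  ∑' i, ENNReal.ofReal (inner ℂ (b i) (A (b i)) : ℂ).re

section Aux

variable {H : Type*} [NormedAddCommGroup H] [InnerProductSpace ℂ H] [CompleteSpace H]
variable {ι : Type*}

lemma isPositive_inner_re {A : H →L[ℂ] H} (hA : A.IsPositive) (v : H) :
    0 ≤ (inner ℂ v (A v) : ℂ).re := by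
  exact (Complex.nonneg_iff.1 (hA.inner_nonneg_right v)).1

lemma isPositive_finset_sum {γ : Type*} (u : Finset γ) (f : γ → H →L[ℂ] H)
    (hf : ∀ j ∈ u, (f j).IsPositive) : (∑ j ∈ u, f j).IsPositive := by
  classical
  induction u using Finset.induction_on with
  | empty => simpa using isPositive_zero
  | @insert a u' hj ih =>
    rw [Finset.sum_insert hj]
    exact (hf a (Finset.mem_insert_self _ _)).add
      (ih fun j hju => hf j (Finset.mem_insert_of_mem hju))

lemma isPositive_conj {x : H →L[ℂ] H} (r : H →L[ℂ] H) (hx : x.IsPositive) :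
    (r * x * star r).IsPositive := by
  simpa [star_eq_adjoint, ContinuousLinearMap.mul_def, ContinuousLinearMap.comp_assoc] using hx.conj_adjoint r

lemma opTrace_zero (b : HilbertBasis ι ℂ H) : opTrace b 0 = 0 := by
  simp [opTrace]

lemma opTrace_add (b : HilbertBasis ι ℂ H) {A B : H →L[ℂ] H}
    (hA : A.IsPositive) (hB : B.IsPositive) :
    opTrace b (A + B) = opTrace b A + opTrace b B := by
  rw [opTrace, opTrace, opTrace, ← ENNReal.tsum_add]
  refine tsum_congr fun i => ?_
  rw [ContinuousLinearMap.add_apply, inner_add_right, Complex.add_re,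
    ENNReal.ofReal_add (isPositive_inner_re hA _) (isPositive_inner_re hB _)]

lemma ofReal_norm_sq_eq_tsum (b : HilbertBasis ι ℂ H) (v : H) :
    ENNReal.ofReal (‖v‖ ^ 2) = ∑' j, ENNReal.ofReal (‖(inner ℂ (b j) v : ℂ)‖ ^ 2) := by
  have h : HasSum (fun j => (inner ℂ v (b j) : ℂ) * inner ℂ (b j) v) (inner ℂ v v) :=
    b.hasSum_inner_mul_inner v v
  have h2 : HasSum (fun j => ((inner ℂ v (b j) : ℂ) * inner ℂ (b j) v).re) ((inner ℂ v v : ℂ)).re :=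
    Complex.reCLM.hasSum h
  have h3 : HasSum (fun j => ‖(inner ℂ (b j) v : ℂ)‖ ^ 2) (‖v‖ ^ 2) := by
    convert h2 using 2 with j
    · show ‖(inner ℂ (b j) v : ℂ)‖ ^ 2 = ((inner ℂ v (b j) : ℂ) * (inner ℂ (b j) v : ℂ)).re
      rw [← inner_conj_symm (𝕜 := ℂ) (b j) v, Complex.mul_conj, Complex.ofReal_re,
        Complex.normSq_eq_norm_sq]
      simp only [Complex.norm_conj]
    · rw [← RCLike.re_to_complex]
      exact (inner_self_eq_norm_sq v).symm
  rw [← h3.tsum_eq, ENNReal.ofReal_tsum_of_nonneg (fun j => sq_nonneg _) h3.summable]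

lemma tsum_norm_sq_adjoint (b : HilbertBasis ι ℂ H) (C : H →L[ℂ] H) :
    ∑' i, ENNReal.ofReal (‖C (b i)‖ ^ 2)
      = ∑' i, ENNReal.ofReal (‖(ContinuousLinearMap.adjoint C) (b i)‖ ^ 2) := by
  have key : ∀ (D : H →L[ℂ] H) (i j : ι),
      ‖(inner ℂ (b j) (D (b i)) : ℂ)‖ = ‖(inner ℂ (b i) ((ContinuousLinearMap.adjoint D) (b j)) : ℂ)‖ := by
    intro D i j
    rw [← ContinuousLinearMap.adjoint_inner_left,
      ← inner_conj_symm (𝕜 := ℂ) ((ContinuousLinearMap.adjoint D) (b j)) (b i)]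
    exact RCLike.norm_conj _
  calc ∑' i, ENNReal.ofReal (‖C (b i)‖ ^ 2)
      = ∑' i, ∑' j, ENNReal.ofReal (‖(inner ℂ (b j) (C (b i)) : ℂ)‖ ^ 2) :=
        tsum_congr fun i => ofReal_norm_sq_eq_tsum b _
    _ = ∑' j, ∑' i, ENNReal.ofReal (‖(inner ℂ (b j) (C (b i)) : ℂ)‖ ^ 2) := ENNReal.tsum_comm
    _ = ∑' j, ∑' i, ENNReal.ofReal (‖(inner ℂ (b i) ((ContinuousLinearMap.adjoint C) (b j)) : ℂ)‖ ^ 2) := by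
        refine tsum_congr fun j => tsum_congr fun i => ?_
        rw [key C i j]
    _ = ∑' j, ENNReal.ofReal (‖(ContinuousLinearMap.adjoint C) (b j)‖ ^ 2) :=
        tsum_congr fun j => (ofReal_norm_sq_eq_tsum b _).symm

lemma tsum_norm_sq_comp_le (b : HilbertBasis ι ℂ H) (s r : H →L[ℂ] H) (hr : ‖r‖ ≤ 1) :
    ∑' i, ENNReal.ofReal (‖(r * s) (b i)‖ ^ 2) ≤ ∑' i, ENNReal.ofReal (‖s (b i)‖ ^ 2) := by
  refine ENNReal.tsum_le_tsum fun i => ENNReal.ofReal_le_ofReal ?_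
  have h1 : ‖(r * s) (b i)‖ ≤ ‖s (b i)‖ := by
    rw [ContinuousLinearMap.mul_apply]
    calc ‖r (s (b i))‖ ≤ ‖r‖ * ‖s (b i)‖ := r.le_opNorm _
    _ ≤ 1 * ‖s (b i)‖ := by
        exact mul_le_mul_of_nonneg_right hr (norm_nonneg _)
    _ = ‖s (b i)‖ := one_mul _
  exact pow_le_pow_left₀ (norm_nonneg _) h1 2

lemma inner_mul_star_re (C : H →L[ℂ] H) (v : H) :
    (inner ℂ v ((C * star C) v) : ℂ).re = ‖(star C) v‖ ^ 2 := by
  rw [ContinuousLinearMap.mul_apply, star_eq_adjoint, ← ContinuousLinearMap.adjoint_inner_left,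
    ← RCLike.re_to_complex, inner_self_eq_norm_sq]

lemma opTrace_mul_star (b : HilbertBasis ι ℂ H) (C : H →L[ℂ] H) :
    opTrace b (C * star C) = ∑' i, ENNReal.ofReal (‖(star C) (b i)‖ ^ 2) :=
  tsum_congr fun i => by rw [inner_mul_star_re]

lemma opTrace_conj_le (b : HilbertBasis ι ℂ H) {x : H →L[ℂ] H} (hx : x.IsPositive)
    {r : H →L[ℂ] H} (hr : ‖r‖ ≤ 1) :
    opTrace b (r * x * star r) ≤ opTrace b x := by
  have hx0 : (0 : H →L[ℂ] H) ≤ x := (ContinuousLinearMap.nonneg_iff_isPositive x).2 hx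
  set s := CFC.sqrt x with hs
  have hs0 : (0 : H →L[ℂ] H) ≤ s := CFC.sqrt_nonneg (a := x)
  have hss : s * s = x := CFC.sqrt_mul_sqrt_self x hx0
  have hsa : star s = s := (IsSelfAdjoint.of_nonneg hs0).star_eq
  have key : r * x * star r = (r * s) * star (r * s) := by
    rw [star_mul, hsa, ← hss]
    noncomm_ring
  have key2 : x = s * star s := by rw [hsa, hss]
  calc opTrace b (r * x * star r)
      = ∑' i, ENNReal.ofReal (‖(star (r * s)) (b i)‖ ^ 2) := by
        rw [key, opTrace_mul_star]
    _ = ∑' i, ENNReal.ofReal (‖(r * s) (b i)‖ ^ 2) := by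
        have h := tsum_norm_sq_adjoint b (star (r * s))
        rw [h]
        refine tsum_congr fun i => ?_
        rw [star_eq_adjoint, ContinuousLinearMap.adjoint_adjoint]
    _ ≤ ∑' i, ENNReal.ofReal (‖s (b i)‖ ^ 2) := tsum_norm_sq_comp_le b s r hr
    _ = opTrace b x := by
        rw [key2, opTrace_mul_star, hsa]

lemma opTrace_finset_sum (b : HilbertBasis ι ℂ H) {γ : Type*} (u : Finset γ)
    (f : γ → H →L[ℂ] H) (hf : ∀ j ∈ u, (f j).IsPositive) :
    opTrace b (∑ j ∈ u, f j) = ∑ j ∈ u, opTrace b (f j) := by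
  classical
  induction u using Finset.induction_on with
  | empty => simp [opTrace_zero]
  | @insert a u' hj ih =>
    rw [Finset.sum_insert hj, Finset.sum_insert hj,
      opTrace_add b (hf a (Finset.mem_insert_self _ _))
        (isPositive_finset_sum u' f fun j hju => hf j (Finset.mem_insert_of_mem hju)),
      ih fun j hju => hf j (Finset.mem_insert_of_mem hju)]

lemma mul_star_expand {m : Type*} [Fintype m] (g f : m → ℂ) (e : m → H →L[ℂ] H)
    (x : H →L[ℂ] H) :
    (∑ j, g j • e j) * x * star (∑ k, f k • e k)
      = ∑ j, ∑ k, (g j * starRingEnd ℂ (f k)) • (e j * x * star (e k)) := by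
  rw [star_sum, Finset.sum_mul, Finset.sum_mul]
  refine Finset.sum_congr rfl fun j _ => ?_
  rw [Finset.mul_sum]
  refine Finset.sum_congr rfl fun k _ => ?_
  rw [star_smul, smul_mul_assoc, smul_mul_assoc, mul_smul_comm, smul_smul]
  rfl

lemma exists_fin_decomp (n : ℕ) (t : Fin n → H →L[ℂ] H) :
    ∃ r : Fin (Module.finrank ℂ (Submodule.span ℂ (Set.range t))) → H →L[ℂ] H,
      ∀ x, ∑ i, t i * x * star (t i) = ∑ j, r j * x * star (r j) := by
  classical
  haveI : FiniteDimensional ℂ (Submodule.span ℂ (Set.range t)) :=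
    FiniteDimensional.span_of_finite ℂ (Set.finite_range t)
  set S := Submodule.span ℂ (Set.range t) with hS
  set dd := Module.finrank ℂ S with hdd
  let s : Module.Basis (Fin dd) ℂ S := Module.finBasis ℂ S
  let tv : Fin n → S := fun i => ⟨t i, Submodule.subset_span ⟨i, rfl⟩⟩
  let c : Fin n → Fin dd → ℂ := fun i j => s.repr (tv i) j
  have ht : ∀ i, t i = ∑ j, c i j • ((s j : S) : H →L[ℂ] H) := by
    intro i
    have h1 : (∑ j, c i j • s j : S) = tv i := s.sum_repr (tv i)
    have h2 : ((∑ j, c i j • s j : S) : H →L[ℂ] H) = t i := by rw [h1]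
    rw [← h2]
    push_cast
    rfl
  let B : Matrix (Fin n) (Fin dd) ℂ := Matrix.of fun i j => starRingEnd ℂ (c i j)
  set M : Matrix (Fin dd) (Fin dd) ℂ := B.conjTranspose * B with hM
  have hMpsd : M.PosSemidef := Matrix.posSemidef_conjTranspose_mul_self B
  obtain ⟨A, hAM, hAH⟩ : ∃ A : Matrix (Fin dd) (Fin dd) ℂ, A * A = M ∧ A.conjTranspose = A := by
    open scoped MatrixOrder in
    obtain ⟨A, hAsa, -, hAM⟩ :=
      CFC.exists_sqrt_of_isSelfAdjoint_of_quasispectrumRestricts hMpsd.isHermitian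
        (QuasispectrumRestricts.nnreal_of_nonneg (Matrix.nonneg_iff_posSemidef.2 hMpsd))
    exact ⟨A, hAM, hAsa.star_eq⟩
  have hcoef : ∀ j k, (∑ i, c i j * starRingEnd ℂ (c i k))
      = ∑ l, starRingEnd ℂ (A l j) * A l k := by
    intro j k
    have h1 : M j k = ∑ i, c i j * starRingEnd ℂ (c i k) := by
      rw [hM]
      simp only [Matrix.mul_apply, Matrix.conjTranspose_apply, B, Matrix.of_apply]
      refine Finset.sum_congr rfl fun i _ => ?_
      simp [Complex.star_def]
    have h2 : M j k = ∑ l, starRingEnd ℂ (A l j) * A l k := by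
      conv_lhs => rw [← hAM]
      simp only [Matrix.mul_apply]
      refine Finset.sum_congr rfl fun l _ => ?_
      have : A j l = starRingEnd ℂ (A l j) := by
        conv_lhs => rw [← hAH]
        rfl
      rw [this]
    rw [← h1, h2]
  refine ⟨fun l => ∑ k, starRingEnd ℂ (A l k) • ((s k : S) : H →L[ℂ] H), fun x => ?_⟩
  have lhs_eq : ∑ i, t i * x * star (t i)
      = ∑ j, ∑ k, (∑ i, c i j * starRingEnd ℂ (c i k)) •
          (((s j : S) : H →L[ℂ] H) * x * star ((s k : S) : H →L[ℂ] H)) := by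
    calc ∑ i, t i * x * star (t i)
        = ∑ i, ∑ j, ∑ k, (c i j * starRingEnd ℂ (c i k)) •
            (((s j : S) : H →L[ℂ] H) * x * star ((s k : S) : H →L[ℂ] H)) := by
          refine Finset.sum_congr rfl fun i _ => ?_
          rw [ht i, mul_star_expand]
      _ = _ := by
          rw [Finset.sum_comm]
          refine Finset.sum_congr rfl fun j _ => ?_
          rw [Finset.sum_comm]
          refine Finset.sum_congr rfl fun k _ => ?_
          rw [Finset.sum_smul]
  have rhs_eq : (∑ l, (∑ k, starRingEnd ℂ (A l k) • ((s k : S) : H →L[ℂ] H)) * x *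
        star (∑ k, starRingEnd ℂ (A l k) • ((s k : S) : H →L[ℂ] H)))
      = ∑ j, ∑ k, (∑ l, starRingEnd ℂ (A l j) * A l k) •
          (((s j : S) : H →L[ℂ] H) * x * star ((s k : S) : H →L[ℂ] H)) := by
    calc _ = ∑ l, ∑ j, ∑ k, (starRingEnd ℂ (A l j) * starRingEnd ℂ (starRingEnd ℂ (A l k))) •
            (((s j : S) : H →L[ℂ] H) * x * star ((s k : S) : H →L[ℂ] H)) := by
          refine Finset.sum_congr rfl fun l _ => ?_
          rw [mul_star_expand]
      _ = _ := by
          rw [Finset.sum_comm]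
          refine Finset.sum_congr rfl fun j _ => ?_
          rw [Finset.sum_comm]
          refine Finset.sum_congr rfl fun k _ => ?_
          rw [Finset.sum_smul]
          refine Finset.sum_congr rfl fun l _ => ?_
          rw [Complex.conj_conj]
  rw [lhs_eq, rhs_eq]
  refine Finset.sum_congr rfl fun j _ => Finset.sum_congr rfl fun k _ => ?_
  rw [hcoef j k]

end Aux

lemma ennreal_cesaro (d : ℕ) (hd : 1 ≤ d) (bb : ℕ → ℝ≥0∞)
    (hrec : ∀ j, bb (j + 1) ≤ d * bb j) (hfin : bb 0 ≠ ⊤) :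
    ∃ K : ℝ≥0∞, K ≤ bb 0 ∧ K ≠ ⊤ ∧
      Tendsto (fun k => (∑ j ∈ range k, bb j) / ∑ j ∈ range k, (d : ℝ≥0∞) ^ j)
        atTop (nhds K) := by
  have hd0 : (d : ℝ≥0∞) ≠ 0 := Nat.cast_ne_zero.2 (by omega)
  have hdt : (d : ℝ≥0∞) ≠ ⊤ := ENNReal.natCast_ne_top d
  have hp0 : ∀ j, ((d : ℝ≥0∞)) ^ j ≠ 0 := fun j => pow_ne_zero _ hd0
  have hpt : ∀ j, ((d : ℝ≥0∞)) ^ j ≠ ⊤ := fun j => ENNReal.pow_ne_top hdt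
  have hbfin : ∀ j, bb j ≠ ⊤ := by
    intro j
    induction j with
    | zero => exact hfin
    | succ m ih =>
      exact ne_top_of_le_ne_top (ENNReal.mul_ne_top hdt ih) (hrec m)
  set c : ℕ → ℝ≥0∞ := fun j => bb j / (d : ℝ≥0∞) ^ j with hc
  have hcmono : Antitone c := by
    refine antitone_nat_of_succ_le fun j => ?_
    calc bb (j + 1) / (d : ℝ≥0∞) ^ (j + 1)
        ≤ ((d : ℝ≥0∞) * bb j) / ((d : ℝ≥0∞) ^ (j + 1)) :=
          ENNReal.div_le_div_right (hrec j) _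
      _ = ((d : ℝ≥0∞) * bb j) / ((d : ℝ≥0∞) * (d : ℝ≥0∞) ^ j) := by rw [pow_succ']
      _ = bb j / (d : ℝ≥0∞) ^ j := ENNReal.mul_div_mul_left _ _ hd0 hdt
  set K : ℝ≥0∞ := ⨅ j, c j with hK
  have hKle : K ≤ bb 0 := by
    calc K ≤ c 0 := iInf_le _ 0
    _ = bb 0 := by rw [hc]; simp
  set SS : ℕ → ℝ≥0∞ := fun k => ∑ j ∈ range k, (d : ℝ≥0∞) ^ j with hSS
  have hSfin : ∀ k, SS k ≠ ⊤ := by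
    intro k
    rw [hSS]
    exact (ENNReal.sum_lt_top.2 fun j _ => (hpt j).lt_top).ne
  have hSk : ∀ k : ℕ, (k : ℝ≥0∞) ≤ SS k := by
    intro k
    have h1 : ∀ j ∈ range k, (1 : ℝ≥0∞) ≤ (d : ℝ≥0∞) ^ j := fun j _ =>
      one_le_pow_of_one_le' (by exact_mod_cast hd) j
    calc (k : ℝ≥0∞) = ∑ _j ∈ range k, 1 := by simp
    _ ≤ SS k := Finset.sum_le_sum h1
  have hS0 : ∀ k, 1 ≤ k → SS k ≠ 0 := by
    intro k hk
    have : (1 : ℝ≥0∞) ≤ SS k := le_trans (by exact_mod_cast hk) (hSk k)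
    exact fun h => by simp [h] at this
  have hStop : Tendsto SS atTop (nhds ⊤) := by
    refine ENNReal.tendsto_nhds_top fun m => ?_
    filter_upwards [eventually_ge_atTop (m + 1)] with k hk
    calc (m : ℝ≥0∞) < (m + 1 : ℕ) := by exact_mod_cast Nat.lt_succ_self m
    _ ≤ (k : ℝ≥0∞) := by exact_mod_cast hk
    _ ≤ SS k := hSk k
  have hSinv : Tendsto (fun k => (SS k)⁻¹) atTop (nhds 0) := by
    have := ENNReal.tendsto_inv_iff.2 hStop
    simpa using this
  set ratio : ℕ → ℝ≥0∞ := fun k => (∑ j ∈ range k, bb j) / SS k with hratio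
  have hlower : ∀ k, 1 ≤ k → K ≤ ratio k := by
    intro k hk
    have h1 : K * SS k ≤ ∑ j ∈ range k, bb j := by
      rw [hSS, Finset.mul_sum]
      refine Finset.sum_le_sum fun j _ => ?_
      have h2 : K ≤ c j := iInf_le _ j
      calc K * (d : ℝ≥0∞) ^ j ≤ c j * (d : ℝ≥0∞) ^ j := mul_le_mul_left h2 _
      _ = bb j := ENNReal.div_mul_cancel (hp0 j) (hpt j)
    calc K = SS k * K / SS k := by
            rw [mul_comm, mul_div_assoc, ENNReal.div_self (hS0 k hk) (hSfin k), mul_one]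
    _ = K * SS k / SS k := by rw [mul_comm (SS k) K]
    _ ≤ ratio k := ENNReal.div_le_div_right h1 _
  have hliminf : K ≤ liminf ratio atTop := by
    refine le_liminf_of_le (by isBoundedDefault) ?_
    filter_upwards [eventually_ge_atTop 1] with k hk
    exact hlower k hk
  have hupper : ∀ m, limsup ratio atTop ≤ c m := by
    intro m
    set Bm : ℝ≥0∞ := ∑ j ∈ range m, bb j with hBm
    have hBmfin : Bm ≠ ⊤ := (ENNReal.sum_lt_top.2 fun j _ => (hbfin j).lt_top).ne
    have hev : ∀ k, ratio k ≤ Bm / SS k + c m := by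
      intro k
      rcases le_or_gt k m with hkm | hmk
      · have h1 : (∑ j ∈ range k, bb j) ≤ Bm :=
          Finset.sum_le_sum_of_subset (Finset.range_subset_range.2 hkm)
        calc ratio k ≤ Bm / SS k := ENNReal.div_le_div_right h1 _
        _ ≤ Bm / SS k + c m := le_self_add
      · have hsplit : (∑ j ∈ range k, bb j) = Bm + ∑ j ∈ Finset.Ico m k, bb j := by
          rw [hBm, Finset.range_eq_Ico, Finset.range_eq_Ico]
          exact (Finset.sum_Ico_consecutive bb (Nat.zero_le m) hmk.le).symm
        have h2 : (∑ j ∈ Finset.Ico m k, bb j) ≤ c m * SS k := by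
          calc (∑ j ∈ Finset.Ico m k, bb j) ≤ ∑ j ∈ Finset.Ico m k, c m * (d : ℝ≥0∞) ^ j := by
                refine Finset.sum_le_sum fun j hj => ?_
                have hjm : m ≤ j := (Finset.mem_Ico.1 hj).1
                have : c j * (d : ℝ≥0∞) ^ j ≤ c m * (d : ℝ≥0∞) ^ j :=
                  mul_le_mul_left (hcmono hjm) _
                calc bb j = c j * (d : ℝ≥0∞) ^ j := (ENNReal.div_mul_cancel (hp0 j) (hpt j)).symm
                _ ≤ c m * (d : ℝ≥0∞) ^ j := this
          _ = c m * ∑ j ∈ Finset.Ico m k, (d : ℝ≥0∞) ^ j := by rw [Finset.mul_sum]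
          _ ≤ c m * SS k := by
                refine mul_le_mul_right ?_ _
                simp only [hSS]
                rw [Finset.range_eq_Ico]
                exact Finset.sum_le_sum_of_subset (Finset.Ico_subset_Ico (Nat.zero_le m) le_rfl)
        calc ratio k ≤ (Bm + c m * SS k) / SS k := by
              refine ENNReal.div_le_div_right ?_ _
              rw [hsplit]
              exact add_le_add_right h2 _
        _ = Bm / SS k + c m * SS k / SS k := by rw [ENNReal.add_div]
        _ ≤ Bm / SS k + c m := by
              refine add_le_add_right ?_ _
              rw [mul_div_assoc]
              calc c m * (SS k / SS k) ≤ c m * 1 :=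
                mul_le_mul_right ENNReal.div_self_le_one _
              _ = c m := mul_one _
    have htend : Tendsto (fun k => Bm / SS k + c m) atTop (nhds (c m)) := by
      have h1 : Tendsto (fun k => Bm / SS k) atTop (nhds 0) := by
        simp only [div_eq_mul_inv]
        have := ENNReal.Tendsto.const_mul hSinv (Or.inr hBmfin)
        simpa using this
      have h2 := h1.add (tendsto_const_nhds (x := c m) (f := atTop))
      simpa using h2
    calc limsup ratio atTop ≤ limsup (fun k => Bm / SS k + c m) atTop :=
      limsup_le_limsup (Eventually.of_forall hev) (by isBoundedDefault) (by isBoundedDefault)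
    _ = c m := htend.limsup_eq
  have hlimsup : limsup ratio atTop ≤ K := le_iInf hupper
  refine ⟨K, hKle, ne_top_of_le_ne_top hfin hKle, ?_⟩
  exact tendsto_of_le_liminf_of_limsup_le hliminf hlimsup


/-- Existence of the curvature of the completely positive map `Θ x = ∑ tᵢ x tᵢ*` on
`B(H)`, where `∑ tᵢ tᵢ* ≤ 1` and some `tᵢ ≠ 0` (so `d = dim span {tᵢ} ≥ 1`): the
sequence `Tr(1 - Θ^k(1)) / ∑_{j<k} d^j` converges in `[0,∞]` to a limit `K`, with
`K ≤ Tr(1 - Θ(1))`, and `K = ∞` iff `Tr(1 - Θ(1)) = ∞`. -/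
theorem curvature_exists
    {H : Type*} [NormedAddCommGroup H] [InnerProductSpace ℂ H] [CompleteSpace H]
    {ι : Type*} (b : HilbertBasis ι ℂ H)
    (n : ℕ) (t : Fin n → H →L[ℂ] H)
    (hcontr : ∑ i, t i * star (t i) ≤ 1)
    (hne : ∃ i, t i ≠ 0)
    (Θ : (H →L[ℂ] H) → (H →L[ℂ] H))
    (hΘ : ∀ x, Θ x = ∑ i, t i * x * star (t i))
    (d : ℕ) (hd : d = Module.finrank ℂ (Submodule.span ℂ (Set.range t))) :
    ∃ K : ℝ≥0∞,
      Filter.Tendsto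
        (fun k => opTrace b (1 - Θ^[k] 1) / ∑ j ∈ Finset.range k, (d : ℝ≥0∞) ^ j)
        Filter.atTop (nhds K) ∧
      K ≤ opTrace b (1 - Θ 1) ∧
      (K = ⊤ ↔ opTrace b (1 - Θ 1) = ⊤) := by
  classical
  subst hd
  haveI : FiniteDimensional ℂ (Submodule.span ℂ (Set.range t)) :=
    FiniteDimensional.span_of_finite ℂ (Set.finite_range t)
  set dd := Module.finrank ℂ (Submodule.span ℂ (Set.range t)) with hdd
  obtain ⟨r, hr⟩ := exists_fin_decomp n t
  have hd1 : 1 ≤ dd := by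
    obtain ⟨i, hi⟩ := hne
    haveI : Nontrivial (Submodule.span ℂ (Set.range t)) := by
      refine nontrivial_of_ne ⟨t i, Submodule.subset_span ⟨i, rfl⟩⟩ 0 ?_
      simp only [ne_eq, Submodule.mk_eq_zero]
      exact hi
    exact Nat.one_le_iff_ne_zero.2 Module.finrank_pos.ne'
  have hΘ1le : ∑ j, r j * star (r j) ≤ 1 := by
    have h1 := hr 1
    simp only [mul_one] at h1
    rw [← h1]
    exact hcontr
  have hrle : ∀ l, r l * star (r l) ≤ 1 := fun l =>
    le_trans (Finset.single_le_sum (f := fun j => r j * star (r j))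
      (fun j _ => mul_star_self_nonneg (r j)) (Finset.mem_univ l)) hΘ1le
  have hrnorm : ∀ l, ‖r l‖ ≤ 1 := by
    intro l
    rw [← norm_star]
    refine ContinuousLinearMap.opNorm_le_bound _ zero_le_one fun v => ?_
    rw [one_mul]
    have h2 : ((1 : H →L[ℂ] H) - r l * star (r l)).IsPositive :=
      (ContinuousLinearMap.le_def _ _).1 (hrle l)
    have h3 := isPositive_inner_re h2 v
    have h4 : (inner ℂ v (((1 : H →L[ℂ] H) - r l * star (r l)) v) : ℂ).re
        = ‖v‖ ^ 2 - ‖(star (r l)) v‖ ^ 2 := by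
      rw [ContinuousLinearMap.sub_apply, inner_sub_right, Complex.sub_re, inner_mul_star_re]
      congr 1
      rw [ContinuousLinearMap.one_apply, ← RCLike.re_to_complex, inner_self_eq_norm_sq]
    rw [h4] at h3
    nlinarith [norm_nonneg ((star (r l)) v), norm_nonneg v]
  have hΘsub : ∀ a c : H →L[ℂ] H, Θ (a - c) = Θ a - Θ c := by
    intro a c
    simp only [hΘ, mul_sub, sub_mul, Finset.sum_sub_distrib]
  have hΘpos : ∀ {x : H →L[ℂ] H}, x.IsPositive → (Θ x).IsPositive := by
    intro x hx
    rw [hΘ]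
    exact isPositive_finset_sum _ _ fun i _ => isPositive_conj (t i) hx
  have hΘ1 : Θ 1 ≤ 1 := by
    rw [hΘ]
    simpa only [mul_one] using hcontr
  set D : ℕ → (H →L[ℂ] H) := fun j => Θ^[j] 1 - Θ^[j + 1] 1 with hD
  have hDsucc : ∀ j, D (j + 1) = Θ (D j) := by
    intro j
    show Θ^[j + 1] 1 - Θ^[j + 1 + 1] 1 = Θ (Θ^[j] 1 - Θ^[j + 1] 1)
    rw [hΘsub, ← Function.iterate_succ_apply' Θ j, ← Function.iterate_succ_apply' Θ (j + 1)]
  have hD0 : D 0 = 1 - Θ 1 := by simp [hD]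
  have hDpos : ∀ j, (D j).IsPositive := by
    intro j
    induction j with
    | zero => rw [hD0]; exact (ContinuousLinearMap.le_def _ _).1 hΘ1
    | succ m ih => rw [hDsucc]; exact hΘpos ih
  have hIterPos : ∀ k, ((1 : H →L[ℂ] H) - Θ^[k] 1).IsPositive := by
    intro k
    induction k with
    | zero => simpa using ContinuousLinearMap.isPositive_zero (E := H) (𝕜 := ℂ)
    | succ m ih =>
      have hsplit : (1 : H →L[ℂ] H) - Θ^[m + 1] 1 = ((1 : H →L[ℂ] H) - Θ^[m] 1) + D m := by
        show _ = _ + (Θ^[m] 1 - Θ^[m + 1] 1)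
        abel
      rw [hsplit]
      exact ih.add (hDpos m)
  have hNum : ∀ k, opTrace b (1 - Θ^[k] 1) = ∑ j ∈ range k, opTrace b (D j) := by
    intro k
    induction k with
    | zero => simp [opTrace_zero]
    | succ m ih =>
      have hsplit : (1 : H →L[ℂ] H) - Θ^[m + 1] 1 = ((1 : H →L[ℂ] H) - Θ^[m] 1) + D m := by
        show _ = _ + (Θ^[m] 1 - Θ^[m + 1] 1)
        abel
      rw [hsplit, opTrace_add b (hIterPos m) (hDpos m), ih, Finset.sum_range_succ]
  have hbound : ∀ j, opTrace b (D (j + 1)) ≤ dd * opTrace b (D j) := by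
    intro j
    rw [hDsucc j, hΘ, hr (D j)]
    calc opTrace b (∑ l, r l * D j * star (r l))
        = ∑ l, opTrace b (r l * D j * star (r l)) :=
          opTrace_finset_sum b _ _ fun l _ => isPositive_conj (r l) (hDpos j)
      _ ≤ ∑ _l : Fin dd, opTrace b (D j) :=
          Finset.sum_le_sum fun l _ => opTrace_conj_le b (hDpos j) (hrnorm l)
      _ = dd * opTrace b (D j) := by
          rw [Finset.sum_const, Finset.card_univ, Fintype.card_fin, nsmul_eq_mul]
  have hSfin : ∀ k, (∑ j ∈ range k, (dd : ℝ≥0∞) ^ j) ≠ ⊤ := fun k =>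
    (ENNReal.sum_lt_top.2 fun j _ =>
      (ENNReal.pow_ne_top (ENNReal.natCast_ne_top dd)).lt_top).ne
  by_cases htop : opTrace b (1 - Θ 1) = ⊤
  · refine ⟨⊤, ?_, by rw [htop], by simp [htop]⟩
    have hev : ∀ᶠ k in atTop,
        (⊤ : ℝ≥0∞) = opTrace b (1 - Θ^[k] 1) / ∑ j ∈ Finset.range k, (dd : ℝ≥0∞) ^ j := by
      filter_upwards [eventually_ge_atTop 1] with k hk
      have h1 : opTrace b (D 0) ≤ ∑ j ∈ range k, opTrace b (D j) :=
        Finset.single_le_sum (f := fun j => opTrace b (D j)) (fun j _ => zero_le) (Finset.mem_range.2 hk)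
      have hD0top : opTrace b (D 0) = ⊤ := by rw [hD0]; exact htop
      have h2 : opTrace b (1 - Θ^[k] 1) = ⊤ := by
        rw [hNum k]
        exact top_le_iff.1 (hD0top ▸ h1)
      rw [h2, ENNReal.top_div_of_ne_top (hSfin k)]
    exact Tendsto.congr' hev tendsto_const_nhds
  · obtain ⟨K, hKle, hKne, hKt⟩ := ennreal_cesaro dd hd1 (fun j => opTrace b (D j)) hbound
      (by simpa [hD0] using htop)
    rw [hD0] at hKle
    refine ⟨K, ?_, hKle, by simp [htop, hKne]⟩
    refine hKt.congr fun k => ?_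
    rw [hNum k]
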